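/- arXiv:2210.15249 — 6 statements merged into one kernel-verified Lean document; each statement's English description precedes it below -/
import Mathlib

section
/- Let X be a connected non-bipartite graph and α an automorphism of BX. Then α is an expected automorphism of BX if and only if for every vertex x of X there exists a vertex y of X with α({(x,0),(x,1)}) = {(y,0),(y,1)}. -/
open SimpleGraph

/-- The canonical double cover `BX = X × K₂` of a graph `X`:
vertex set `V × Bool`, with `(x,i)` adjacent to `(y,j)` iff `x ~ y` in `X` and `i ≠ j`. -/
def doubleCover {V : Type*} (X : SimpleGraph V) : SimpleGraph (V × Bool) where
  Adj p q := X.Adj p.1 q.1 ∧ p.2 ≠ q.2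
  symm := ⟨fun p q h => ⟨X.adj_symm h.1, Ne.symm h.2⟩⟩
  loopless := ⟨fun p h => h.2 rfl⟩

/-- An automorphism of `BX` is *expected* if it lies in the subgroup generated by the
lifts of automorphisms of `X` and the coordinate swap `τ`, i.e. it has the form
`(x,i) ↦ (φ x, i + b)` for some automorphism `φ` of `X` and some `b`. -/
def IsExpected {V : Type*} (X : SimpleGraph V) (α : doubleCover X ≃g doubleCover X) : Prop :=
  ∃ (φ : X ≃g X) (b : Bool), ∀ p : V × Bool, α p = (φ p.1, xor p.2 b)

/-- A graph is *stable* if every automorphism of its canonical double cover is expected. -/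
def IsStable {V : Type*} (X : SimpleGraph V) : Prop :=
  ∀ α : doubleCover X ≃g doubleCover X, IsExpected X α

/-- A graph is *twin-free* if distinct vertices have distinct neighbourhoods. -/
def TwinFree {V : Type*} (X : SimpleGraph V) : Prop :=
  ∀ u v : V, X.neighborSet u = X.neighborSet v → u = v

theorem expected_iff_preserves_fibres {V : Type*} [Fintype V] (X : SimpleGraph V)
    (hconn : X.Connected) (hnbip : ¬X.Colorable 2)
    (α : doubleCover X ≃g doubleCover X) :
    IsExpected X α ↔
      ∀ x : V, ∃ y : V,
        ({α (x, false), α (x, true)} : Set (V × Bool)) = {(y, false), (y, true)} := by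
  constructor
  · rintro ⟨φ, b, hφ⟩ x
    refine ⟨φ x, ?_⟩
    rw [hφ (x, false), hφ (x, true)]
    cases b <;> simp [Set.pair_comm]
  · intro h
    have hne : ∀ x : V, α (x, false) ≠ α (x, true) := fun x =>
      α.injective.ne (by simp)
    have key : ∀ x : V, (α (x, false)).1 = (α (x, true)).1 ∧
        (α (x, true)).2 = !(α (x, false)).2 := by
      intro x
      obtain ⟨y, hy⟩ := h x
      have h0 : α (x, false) ∈ ({(y, false), (y, true)} : Set (V × Bool)) := by
        rw [← hy]; left; rfl
      have h1 : α (x, true) ∈ ({(y, false), (y, true)} : Set (V × Bool)) := by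
        rw [← hy]; right; rfl
      have hne' := hne x
      rcases h0 with h0 | h0 <;> rcases h1 with h1 | h1 <;>
        (try simp only [Set.mem_singleton_iff] at h0 h1) <;> rw [h0, h1] <;> simp_all
    obtain ⟨x₀⟩ := hconn.nonempty
    set b : Bool := (α (x₀, false)).2 with hbdef
    have hadjb : ∀ x x', X.Adj x x' → (α (x, false)).2 = (α (x', false)).2 := by
      intro x x' hxx'
      have hadj : (doubleCover X).Adj (x, false) (x', true) := ⟨hxx', by simp⟩
      have hmap := α.map_adj_iff.mpr hadj
      have hne2 : (α (x, false)).2 ≠ (α (x', true)).2 := hmap.2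
      rw [(key x').2] at hne2
      revert hne2; cases (α (x, false)).2 <;> cases (α (x', false)).2 <;> simp
    have hwalk : ∀ u v : V, X.Walk u v → (α (u, false)).2 = (α (v, false)).2 := by
      intro u v w
      induction w with
      | nil => rfl
      | cons hadj _ ih => exact (hadjb _ _ hadj).trans ih
    have hb : ∀ x, (α (x, false)).2 = b := by
      intro x
      obtain ⟨w⟩ := hconn x₀ x
      exact (hwalk x₀ x w).symm
    set f : V → V := fun x => (α (x, false)).1 with hfdef
    have hinj : Function.Injective f := by
      intro x x' hxx'
      have heq : α (x, false) = α (x', false) :=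
        Prod.ext hxx' ((hb x).trans (hb x').symm)
      exact (Prod.ext_iff.mp (α.injective heq)).1
    have hbij : Function.Bijective f := (Finite.injective_iff_bijective).mp hinj
    have hAdjIff : ∀ x x', X.Adj (f x) (f x') ↔ X.Adj x x' := by
      intro x x'
      have h1 : α (x, false) = (f x, b) := Prod.ext rfl (hb x)
      have h2 : α (x', true) = (f x', !b) :=
        Prod.ext (key x').1.symm (by rw [(key x').2, hb x'])
      constructor
      · intro hx
        have hA : (doubleCover X).Adj (α (x, false)) (α (x', true)) := by
          rw [h1, h2]; exact ⟨hx, by cases b <;> simp⟩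
        exact ((α.map_adj_iff).mp hA).1
      · intro hx
        have hmap := α.map_adj_iff.mpr (⟨hx, by simp⟩ : (doubleCover X).Adj (x, false) (x', true))
        rw [h1, h2] at hmap
        exact hmap.1
    refine ⟨⟨Equiv.ofBijective f hbij, fun {a b'} => hAdjIff a b'⟩, b, ?_⟩
    rintro ⟨x, i⟩
    cases i
    · exact Prod.ext rfl (by simpa using hb x)
    · refine Prod.ext (key x).1.symm ?_
      rw [(key x).2, hb x]; cases b <;> rfl
end

section
/- Let X be a graph in which every edge lies on a triangle. Then for every vertex x, the set of vertices of BX at distance 2 from (x,0) equals (X₁(x) ∪ X₂(x)) × {0}, where Xᵢ(x) denotes the set of vertices of X at distance i from x. -/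
open SimpleGraph

/-- Projection from the double cover to the base graph. -/
def dcProj {V : Type*} (X : SimpleGraph V) : doubleCover X →g X :=
  ⟨Prod.fst, fun h => h.1⟩

lemma dc_parity {V : Type*} (X : SimpleGraph V) {p q : V × Bool}
    (w : (doubleCover X).Walk p q) : (p.2 = q.2) ↔ Even w.length := by
  induction w with
  | nil => simp
  | cons h w ih =>
    rename_i a b c
    rw [SimpleGraph.Walk.length_cons, Nat.even_add_one, ← ih]
    have hab : a.2 ≠ b.2 := h.2
    revert hab
    cases a.2 <;> cases b.2 <;> cases c.2 <;> simp

lemma dc_walk2 {V : Type*} (X : SimpleGraph V) {x y w : V}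
    (h1 : X.Adj x w) (h2 : X.Adj w y) :
    ∃ wk : (doubleCover X).Walk (x, false) (y, false), wk.length = 2 :=
  ⟨SimpleGraph.Walk.cons (⟨h1, by simp⟩ : (doubleCover X).Adj (x, false) (w, true))
      (SimpleGraph.Walk.cons (⟨h2, by simp⟩ : (doubleCover X).Adj (w, true) (y, false))
        SimpleGraph.Walk.nil), rfl⟩

theorem doubleCover_sphere_two {V : Type*} [Fintype V] (X : SimpleGraph V)
    (htri : ∀ u v : V, X.Adj u v → ∃ w : V, X.Adj u w ∧ X.Adj v w) (x : V) :
    {p : V × Bool | (doubleCover X).dist (x, false) p = 2} =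
      {p : V × Bool | (X.dist x p.1 = 1 ∨ X.dist x p.1 = 2) ∧ p.2 = false} := by
  ext p
  simp only [Set.mem_setOf_eq]
  constructor
  · intro hp
    obtain ⟨w, hwl⟩ := SimpleGraph.exists_walk_of_dist_ne_zero (by omega : (doubleCover X).dist (x,false) p ≠ 0)
    rw [hp] at hwl
    have hpar : p.2 = false := by
      have := (dc_parity X w).mpr (by rw [hwl]; exact even_two)
      exact this.symm
    refine ⟨?_, hpar⟩
    have hne : p ≠ (x, false) := by
      intro h; rw [h] at hp; simp [SimpleGraph.dist_self] at hp
    have hne1 : p.1 ≠ x := by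
      intro h
      apply hne
      rw [Prod.ext_iff]; exact ⟨h, hpar⟩
    -- project the walk
    have wX : X.Walk x p.1 := w.map (dcProj X)
    have hle : X.dist x p.1 ≤ 2 := by
      have := SimpleGraph.dist_le (w.map (dcProj X))
      rwa [SimpleGraph.Walk.length_map, hwl] at this
    have hne0 : X.dist x p.1 ≠ 0 := by
      rw [SimpleGraph.dist_ne_zero_iff_ne_and_reachable]
      exact ⟨fun h => hne1 h.symm, ⟨wX⟩⟩
    omega
  · rintro ⟨hd, hpar⟩
    obtain ⟨y, b⟩ := p
    simp only at hd hpar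
    subst hpar
    have hwk : ∃ wk : (doubleCover X).Walk (x, false) (y, false), wk.length = 2 := by
      rcases hd with hd | hd
      · have hadj : X.Adj x y := SimpleGraph.dist_eq_one_iff_adj.mp hd
        obtain ⟨w, hw1, hw2⟩ := htri x y hadj
        exact dc_walk2 X hw1 (X.adj_symm hw2)
      · obtain ⟨w, hwl⟩ := SimpleGraph.exists_walk_of_dist_ne_zero (by omega : X.dist x y ≠ 0)
        rw [hd] at hwl
        -- walk of length 2 in X
        cases w with
        | nil => simp at hwl
        | cons h w' =>
          cases w' with
          | nil => simp at hwl
          | cons h' w'' =>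
            cases w'' with
            | nil => exact dc_walk2 X h h'
            | cons h3 w3 => simp [SimpleGraph.Walk.length_cons] at hwl
    obtain ⟨wk, hwkl⟩ := hwk
    have hle : (doubleCover X).dist (x, false) (y, false) ≤ 2 := by
      have := SimpleGraph.dist_le wk
      omega
    have hne0 : (doubleCover X).dist (x, false) (y, false) ≠ 0 := by
      rw [SimpleGraph.dist_ne_zero_iff_ne_and_reachable]
      constructor
      · intro h
        have : x = y := (Prod.ext_iff.mp h).1
        subst this
        simp [SimpleGraph.dist_self] at hd
      · exact ⟨wk⟩
    have hne1 : (doubleCover X).dist (x, false) (y, false) ≠ 1 := by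
      intro h
      have := SimpleGraph.dist_eq_one_iff_adj.mp h
      exact this.2 rfl
    omega
end

section
/- Let X be a non-trivial connected graph such that (1) every edge of X lies on a triangle, (2) for every vertex x, every vertex at distance 2 from x has a neighbour at distance 3 from x, and every vertex at distance 3 from x has a neighbour at distance 4 from x. Then X is stable. -/
open SimpleGraph

namespace DCAux

variable {V : Type*} (X : SimpleGraph V)

/-- projection hom -/
def proj : doubleCover X →g X := ⟨Prod.fst, fun h => h.1⟩

variable {X}

/-- parity of walks in the double cover -/
lemma dc_parity : ∀ {p q : V × Bool} (w : (doubleCover X).Walk p q),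
    (p.2 = q.2 ↔ Even w.length) := by
  intro p q w
  induction w with
  | nil => simp
  | @cons a b c h w ih =>
    have hb : a.2 ≠ b.2 := h.2
    rw [Walk.length_cons, Nat.even_add_one, ← ih]
    constructor
    · intro hac hbc; exact hb (hac.trans hbc.symm)
    · intro hn
      cases ha : a.2 <;> cases hc : c.2 <;> cases hbv : b.2 <;> simp_all

/-- lift a walk to the double cover with matching parity -/
lemma dc_lift : ∀ {x y : V} (w : X.Walk x y) (i j : Bool), (i = j ↔ Even w.length) →
    ∃ w' : (doubleCover X).Walk (x, i) (y, j), w'.length = w.length := by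
  intro x y w
  induction w with
  | nil =>
    intro i j hij
    simp only [Walk.length_nil] at hij
    obtain rfl : i = j := hij.mpr (by simp)
    exact ⟨Walk.nil, rfl⟩
  | @cons a b c h w ih =>
    intro i j hij
    simp only [Walk.length_cons, Nat.even_add_one] at hij
    have h2 : (!i) = j ↔ Even w.length := by
      cases i <;> cases j <;> simp_all
    obtain ⟨w', hw'⟩ := ih (!i) j h2
    refine ⟨Walk.cons (show (doubleCover X).Adj (a, i) (b, !i) from ⟨h, by simp⟩) w', by simp [hw']⟩

/-- every walk of positive length can be lengthened by one (triangle condition) -/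
lemma walk_succ (htri : ∀ u v : V, X.Adj u v → ∃ w : V, X.Adj u w ∧ X.Adj v w) :
    ∀ {x y : V} (w : X.Walk x y), 0 < w.length →
    ∃ w' : X.Walk x y, w'.length = w.length + 1 := by
  intro x y w hw
  cases w with
  | nil => simp at hw
  | @cons _ u _ h w2 =>
    obtain ⟨t, hxt, hut⟩ := htri x u h
    exact ⟨Walk.cons hxt (Walk.cons hut.symm w2), by simp⟩

/-- every vertex has a neighbour -/
lemma exists_adj [Nontrivial V] (hconn : X.Connected) (x : V) : ∃ u, X.Adj x u := by
  obtain ⟨y, hy⟩ := exists_ne x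
  obtain ⟨w⟩ := hconn.preconnected x y
  cases w with
  | nil => exact absurd rfl hy
  | cons h _ => exact ⟨_, h⟩

/-- closed walk of length 3 through any vertex -/
lemma walk3 [Nontrivial V] (hconn : X.Connected)
    (htri : ∀ u v : V, X.Adj u v → ∃ w : V, X.Adj u w ∧ X.Adj v w) (x : V) :
    ∃ w : X.Walk x x, w.length = 3 := by
  obtain ⟨u, hxu⟩ := exists_adj hconn x
  obtain ⟨t, hxt, hut⟩ := htri x u hxu
  exact ⟨Walk.cons hxu (Walk.cons hut (Walk.cons hxt.symm Walk.nil)), rfl⟩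

/-- walk of prescribed parity between any two vertices -/
lemma parity_walk [Nontrivial V] (hconn : X.Connected)
    (htri : ∀ u v : V, X.Adj u v → ∃ w : V, X.Adj u w ∧ X.Adj v w) (x y : V) (i j : Bool) :
    ∃ w : X.Walk x y, (i = j ↔ Even w.length) := by
  obtain ⟨w⟩ := hconn.preconnected x y
  by_cases hp : (i = j ↔ Even w.length)
  · exact ⟨w, hp⟩
  · rcases Nat.eq_zero_or_pos w.length with h0 | h0
    · -- w is nil, x = y, need odd walk, i ≠ j
      obtain rfl : x = y := Walk.eq_of_length_eq_zero h0
      have hij : i ≠ j := fun hij => hp ⟨fun _ => h0 ▸ Even.zero, fun _ => hij⟩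
      obtain ⟨w3, hw3⟩ := walk3 hconn htri x
      refine ⟨w3, ?_⟩
      rw [hw3]
      exact ⟨fun h' => absurd h' hij, fun h' => absurd h' (by decide)⟩
    · obtain ⟨w', hw'⟩ := walk_succ htri w h0
      refine ⟨w', ?_⟩
      rw [hw', Nat.even_add_one]
      cases i <;> cases j <;> simp_all


/-- the double cover is connected (reachability) -/
lemma dc_reachable [Nontrivial V] (hconn : X.Connected)
    (htri : ∀ u v : V, X.Adj u v → ∃ w : V, X.Adj u w ∧ X.Adj v w) (p q : V × Bool) :
    (doubleCover X).Reachable p q := by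
  obtain ⟨w, hw⟩ := parity_walk hconn htri p.1 q.1 p.2 q.2
  obtain ⟨w', -⟩ := dc_lift w p.2 q.2 hw
  exact ⟨w'⟩

lemma proj_dist_le [Nontrivial V] (hconn : X.Connected)
    (htri : ∀ u v : V, X.Adj u v → ∃ w : V, X.Adj u w ∧ X.Adj v w) (p q : V × Bool) :
    X.dist p.1 q.1 ≤ (doubleCover X).dist p q := by
  obtain ⟨w, hw⟩ := (dc_reachable hconn htri p q).exists_walk_length_eq_dist
  have := dist_le (w.map (proj X))
  rwa [Walk.length_map, hw] at this

lemma dist_partner [Nontrivial V] (hconn : X.Connected)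
    (htri : ∀ u v : V, X.Adj u v → ∃ w : V, X.Adj u w ∧ X.Adj v w) (x : V) (i : Bool) :
    (doubleCover X).dist (x, i) (x, !i) = 3 := by
  obtain ⟨w3, hw3⟩ := walk3 hconn htri x
  obtain ⟨w', hw'⟩ := dc_lift w3 i (!i)
    ⟨fun h => absurd h (by simp), fun h => absurd h (by rw [hw3]; decide)⟩
  have hle : (doubleCover X).dist (x, i) (x, !i) ≤ 3 := by
    have := dist_le w'; omega
  obtain ⟨w, hw⟩ := (dc_reachable hconn htri (x, i) (x, !i)).exists_walk_length_eq_dist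
  have hpar : ¬ Even w.length := fun h => absurd ((dc_parity w).mpr h) (by simp)
  have h1 : w.length ≠ 1 := by
    intro h
    exact X.loopless.irrefl x (Walk.adj_of_length_eq_one h).1
  rw [Nat.not_even_iff] at hpar
  omega

lemma adj_dist_le_two (htri : ∀ u v : V, X.Adj u v → ∃ w : V, X.Adj u w ∧ X.Adj v w)
    {x z : V} (h : X.Adj x z) (i : Bool) :
    (doubleCover X).dist (x, i) (z, i) ≤ 2 := by
  obtain ⟨t, hxt, hzt⟩ := htri x z h
  set w2 : X.Walk x z := Walk.cons hxt (Walk.cons hzt.symm Walk.nil) with hw2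
  have hlen : w2.length = 2 := rfl
  obtain ⟨w', hw'⟩ := dc_lift w2 i i ⟨fun _ => by rw [hlen]; decide, fun _ => rfl⟩
  have := dist_le w'
  omega

lemma exists_far_neighbor [Nontrivial V] (hconn : X.Connected)
    (htri : ∀ u v : V, X.Adj u v → ∃ w : V, X.Adj u w ∧ X.Adj v w)
    (h2 : ∀ x y : V, X.dist x y = 2 → ∃ z : V, X.Adj y z ∧ X.dist x z = 3)
    (h3 : ∀ x y : V, X.dist x y = 3 → ∃ z : V, X.Adj y z ∧ X.dist x z = 4)
    (p q : V × Bool) (hne : p.1 ≠ q.1) (hd : (doubleCover X).dist p q = 3) :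
    ∃ r, (doubleCover X).Adj q r ∧ (doubleCover X).dist p r = 4 := by
  obtain ⟨x, i⟩ := p
  obtain ⟨y, j⟩ := q
  obtain ⟨w, hw⟩ := (dc_reachable hconn htri (x, i) (y, j)).exists_walk_length_eq_dist
  rw [hd] at hw
  have hpar : i ≠ j := fun h => absurd (hw ▸ (dc_parity w).mp h) (by decide)
  have hdle : X.dist x y ≤ 3 := by
    have := dist_le (w.map (proj X))
    rwa [Walk.length_map, hw] at this
  have hdpos : 0 < X.dist x y := (hconn.preconnected x y).pos_dist_of_ne hne
  have hd1 : X.dist x y ≠ 1 := by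
    intro h1
    have hadj : (doubleCover X).Adj (x, i) (y, j) := ⟨dist_eq_one_iff_adj.mp h1, hpar⟩
    have hx := dist_le hadj.toWalk
    simp only [Walk.length_cons, Walk.length_nil] at hx
    omega
  have hget4 : ∀ z : V, X.dist x z = 4 → (doubleCover X).dist (x, i) (z, i) ≤ 4 := by
    intro z hz
    obtain ⟨wz, hwz⟩ := hconn.exists_walk_length_eq_dist x z
    rw [hz] at hwz
    obtain ⟨w', hw'⟩ := dc_lift wz i i ⟨fun _ => by rw [hwz]; decide, fun _ => rfl⟩
    have := dist_le w'
    omega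
  rcases (by omega : X.dist x y = 2 ∨ X.dist x y = 3) with hd2 | hd3
  · obtain ⟨z, hyz, hz3⟩ := h2 x y hd2
    refine ⟨(z, i), ⟨hyz, hpar.symm⟩, ?_⟩
    -- upper bound: extend a length-3 walk to length 4
    obtain ⟨wz, hwz⟩ := hconn.exists_walk_length_eq_dist x z
    rw [hz3] at hwz
    obtain ⟨wz4, hwz4⟩ := walk_succ htri wz (by omega)
    obtain ⟨w', hw'⟩ := dc_lift wz4 i i ⟨fun _ => by rw [hwz4, hwz]; decide, fun _ => rfl⟩
    have hub := dist_le w'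
    -- lower bound
    obtain ⟨u, hu⟩ := (dc_reachable hconn htri (x, i) (z, i)).exists_walk_length_eq_dist
    have hpe : Even u.length := (dc_parity u).mp rfl
    have hlb : X.dist x z ≤ u.length := by
      have := dist_le (u.map (proj X)); rwa [Walk.length_map] at this
    rw [Nat.even_iff] at hpe
    rw [hz3] at hlb
    omega
  · obtain ⟨z, hyz, hz4⟩ := h3 x y hd3
    refine ⟨(z, i), ⟨hyz, hpar.symm⟩, ?_⟩
    have hub := hget4 z hz4
    have hlb := proj_dist_le hconn htri (x, i) (z, i)
    simp only [hz4] at hlb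
    omega


lemma dist_map [Nontrivial V] (hconn : X.Connected)
    (htri : ∀ u v : V, X.Adj u v → ∃ w : V, X.Adj u w ∧ X.Adj v w)
    (β : doubleCover X ≃g doubleCover X) (p q : V × Bool) :
    (doubleCover X).dist (β p) (β q) = (doubleCover X).dist p q := by
  have key : ∀ (γ : doubleCover X ≃g doubleCover X) (p q : V × Bool),
      (doubleCover X).dist (γ p) (γ q) ≤ (doubleCover X).dist p q := by
    intro γ p q
    obtain ⟨w, hw⟩ := (dc_reachable hconn htri p q).exists_walk_length_eq_dist
    have := dist_le (w.map γ.toHom)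
    rwa [Walk.length_map, hw] at this
  refine le_antisymm (key β p q) ?_
  have := key β.symm (β p) (β q)
  rwa [β.symm_apply_apply, β.symm_apply_apply] at this

lemma partner_unique [Nontrivial V] (hconn : X.Connected)
    (htri : ∀ u v : V, X.Adj u v → ∃ w : V, X.Adj u w ∧ X.Adj v w)
    (h2 : ∀ x y : V, X.dist x y = 2 → ∃ z : V, X.Adj y z ∧ X.dist x z = 3)
    (h3 : ∀ x y : V, X.dist x y = 3 → ∃ z : V, X.Adj y z ∧ X.dist x z = 4)
    (p q : V × Bool) (hd : (doubleCover X).dist p q = 3)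
    (hnb : ∀ r, (doubleCover X).Adj q r → (doubleCover X).dist p r ≠ 4) :
    q = (p.1, !p.2) := by
  by_cases h : p.1 = q.1
  · obtain ⟨w, hw⟩ := (dc_reachable hconn htri p q).exists_walk_length_eq_dist
    have hp2 : p.2 ≠ q.2 := fun hh => absurd ((dc_parity w).mp hh) (by rw [hw, hd]; decide)
    obtain ⟨x, i⟩ := p
    obtain ⟨y, j⟩ := q
    simp only at h hp2
    subst h
    cases i <;> cases j <;> simp_all
  · obtain ⟨r, har, hdr⟩ := exists_far_neighbor hconn htri h2 h3 p q h hd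
    exact absurd hdr (hnb r har)

lemma partner_comm [Nontrivial V] (hconn : X.Connected)
    (htri : ∀ u v : V, X.Adj u v → ∃ w : V, X.Adj u w ∧ X.Adj v w)
    (h2 : ∀ x y : V, X.dist x y = 2 → ∃ z : V, X.Adj y z ∧ X.dist x z = 3)
    (h3 : ∀ x y : V, X.dist x y = 3 → ∃ z : V, X.Adj y z ∧ X.dist x z = 4)
    (β : doubleCover X ≃g doubleCover X) (p : V × Bool) :
    β (p.1, !p.2) = ((β p).1, !(β p).2) := by
  have hd : (doubleCover X).dist (β p) (β (p.1, !p.2)) = 3 := by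
    rw [dist_map hconn htri]
    exact dist_partner hconn htri p.1 p.2
  have hnb : ∀ r, (doubleCover X).Adj (β (p.1, !p.2)) r →
      (doubleCover X).dist (β p) r ≠ 4 := by
    intro r har
    have har' : (doubleCover X).Adj (p.1, !p.2) (β.symm r) := by
      rw [← β.apply_symm_apply r] at har
      exact β.map_adj_iff.mp har
    have hs2 : (β.symm r).2 = p.2 := by
      have h2' := har'.2
      cases hp2 : p.2 <;> cases hs : (β.symm r).2 <;> simp_all
    have hle : (doubleCover X).dist p (β.symm r) ≤ 2 := by
      have h' := adj_dist_le_two htri har'.1 p.2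
      have he : β.symm r = ((β.symm r).1, p.2) := by
        rw [← hs2]
      rw [he]
      exact h'
    have heq : (doubleCover X).dist (β p) r = (doubleCover X).dist p (β.symm r) := by
      have := dist_map hconn htri β p (β.symm r)
      rwa [β.apply_symm_apply] at this
    omega
  exact partner_unique hconn htri h2 h3 (β p) (β (p.1, !p.2)) hd hnb

end DCAux

theorem stable_of_triangles_and_distance_conditions {V : Type*} [Fintype V] [Nontrivial V]
    (X : SimpleGraph V) (hconn : X.Connected)
    (htri : ∀ u v : V, X.Adj u v → ∃ w : V, X.Adj u w ∧ X.Adj v w)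
    (h2 : ∀ x y : V, X.dist x y = 2 → ∃ z : V, X.Adj y z ∧ X.dist x z = 3)
    (h3 : ∀ x y : V, X.dist x y = 3 → ∃ z : V, X.Adj y z ∧ X.dist x z = 4) :
    IsStable X := by
  intro α
  have pc := DCAux.partner_comm hconn htri h2 h3
  -- first coordinates agree on the two levels
  have adj_map : ∀ (β : doubleCover X ≃g doubleCover X) (x y : V), X.Adj x y →
      X.Adj (β (x, false)).1 (β (y, false)).1 := by
    intro β x y hxy
    have hadj : (doubleCover X).Adj (β (x, false)) (β (y, true)) :=
      β.map_adj_iff.mpr ⟨hxy, by simp⟩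
    have h1 := hadj.1
    have hb : β (x, true) = ((β (x, false)).1, !(β (x, false)).2) := pc β (x, false)
    have hb' : β (y, true) = ((β (y, false)).1, !(β (y, false)).2) := pc β (y, false)
    rw [hb'] at h1
    exact h1
  have linv : ∀ x : V, (α.symm ((α (x, false)).1, false)).1 = x := by
    intro x
    cases hc : (α (x, false)).2 with
    | false =>
      have he : ((α (x, false)).1, false) = α (x, false) := Prod.ext rfl hc.symm
      rw [he, α.symm_apply_apply]
    | true =>
      have he : ((α (x, false)).1, false) = ((α (x, false)).1, !(α (x, false)).2) :=
        Prod.ext rfl (by simp [hc])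
      have hpc : α ((x, false).1, !(x, false).2) = ((α (x, false)).1, !(α (x, false)).2) :=
        pc α (x, false)
      rw [he, ← hpc, α.symm_apply_apply]
  have rinv : ∀ x : V, (α ((α.symm (x, false)).1, false)).1 = x := by
    intro x
    cases hc : (α.symm (x, false)).2 with
    | false =>
      have he : ((α.symm (x, false)).1, false) = α.symm (x, false) := Prod.ext rfl hc.symm
      rw [he, α.apply_symm_apply]
    | true =>
      have he : ((α.symm (x, false)).1, false) =
          ((α.symm (x, false)).1, !(α.symm (x, false)).2) := Prod.ext rfl (by simp [hc])
      have hpc : α.symm ((x, false).1, !(x, false).2) =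
          ((α.symm (x, false)).1, !(α.symm (x, false)).2) := pc α.symm (x, false)
      rw [he, ← hpc, α.apply_symm_apply]
  -- constancy of the second coordinate
  have step : ∀ a b : V, X.Adj a b → (α (a, false)).2 = (α (b, false)).2 := by
    intro a b hab
    have hadj : (doubleCover X).Adj (α (a, false)) (α (b, true)) :=
      α.map_adj_iff.mpr ⟨hab, by simp⟩
    have h2' := hadj.2
    have hpc : α (b, true) = ((α (b, false)).1, !(α (b, false)).2) := pc α (b, false)
    rw [hpc] at h2'
    have h2'' : (α (a, false)).2 ≠ !(α (b, false)).2 := h2'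
    revert h2''
    cases (α (a, false)).2 <;> cases (α (b, false)).2 <;> decide
  have cconst : ∀ x y : V, (α (x, false)).2 = (α (y, false)).2 := by
    intro x y
    obtain ⟨w⟩ := hconn.preconnected x y
    induction w with
    | nil => rfl
    | cons h w ih => exact (step _ _ h).trans ih
  obtain ⟨x0, -, -⟩ := exists_pair_ne V
  refine ⟨⟨⟨fun x => (α (x, false)).1, fun x => (α.symm (x, false)).1, linv, rinv⟩, ?_⟩,
    (α (x0, false)).2, ?_⟩
  · -- map_rel_iff'
    intro x y
    constructor
    · intro h
      have h' : X.Adj (α (x, false)).1 (α (y, false)).1 := h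
      have := adj_map α.symm _ _ h'
      rwa [linv x, linv y] at this
    · exact adj_map α x y
  · rintro ⟨x, i⟩
    cases i with
    | false =>
      show α (x, false) = ((α (x, false)).1, xor false (α (x0, false)).2)
      rw [Bool.false_xor, ← cconst x x0]
    | true =>
      show α (x, true) = ((α (x, false)).1, xor true (α (x0, false)).2)
      rw [Bool.true_xor, ← cconst x x0]
      exact pc α (x, false)
end

section
/- Let X be a connected distance-regular graph of diameter d ≥ 4 with intersection array {b₀,…,b_{d-1}, c₁,…,c_d}. If b₀ > b₁ + 1 and b₂ ≥ 1 and b₃ ≥ 1, then X is stable. -/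
open SimpleGraph

private lemma bool_step : ∀ s t s' t' : Bool, s ≠ s' → t ≠ t' → xor s t = xor s' t' := by
  decide

private lemma bool_solve : ∀ s t u : Bool, xor s t = u → s = xor t u := by decide

private lemma bool_tt : ∀ s u : Bool, (!u) = (s ^^ u) → s = true := by decide

private lemma bool_ff : ∀ s u : Bool, u = (s ^^ u) → s = false := by decide

/-- If every vertex has a neighbour and every edge lies in a triangle, the double
cover is connected in the strong sense that all fibre pairs are mutually reachable. -/
private lemma dc_reach {V : Type*} (X : SimpleGraph V) (hconn : X.Connected)
    (hnbr : ∀ x : V, ∃ y, X.Adj x y)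
    (hcommon : ∀ x y : V, X.Adj x y → ∃ z, X.Adj x z ∧ X.Adj y z) :
    ∀ (x y : V) (i j : Bool), (doubleCover X).Reachable (x, i) (y, j) := by
  have hflip : ∀ (x : V) (i : Bool), (doubleCover X).Reachable (x, i) (x, !i) := by
    intro x i
    obtain ⟨y, hxy⟩ := hnbr x
    obtain ⟨z, hxz, hyz⟩ := hcommon x y hxy
    have h1 : (doubleCover X).Adj (x, i) (y, !i) := ⟨hxy, by cases i <;> simp⟩
    have h2 : (doubleCover X).Adj (y, !i) (z, i) := ⟨hyz, by cases i <;> simp⟩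
    have h3 : (doubleCover X).Adj (z, i) (x, !i) := ⟨hxz.symm, by cases i <;> simp⟩
    exact h1.reachable.trans (h2.reachable.trans h3.reachable)
  intro x y i j
  obtain ⟨w⟩ := hconn.preconnected x y
  induction w generalizing i with
  | nil =>
    cases i <;> cases j
    · rfl
    · simpa using hflip _ false
    · simpa using hflip _ true
    · rfl
  | @cons a c y h p ih =>
    exact (SimpleGraph.Adj.reachable (⟨h, by cases i <;> simp⟩ :
      (doubleCover X).Adj (a, i) (c, !i))).trans (ih (!i))

theorem stable_of_distance_regular {V : Type*} [Fintype V] (X : SimpleGraph V)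
    [DecidableRel X.Adj] (d : ℕ) (b c : ℕ → ℕ)
    (hreg : ∃ k, X.IsRegularOfDegree k)
    (hconn : X.Connected) (hdiam : X.diam = d) (hd : 4 ≤ d)
    (hb : ∀ j < d, ∀ x y : V, X.dist x y = j →
      (X.neighborSet y ∩ {z | X.dist x z = j + 1}).ncard = b j)
    (hc : ∀ j, 1 ≤ j → j ≤ d → ∀ x y : V, X.dist x y = j →
      (X.neighborSet y ∩ {z | X.dist x z = j - 1}).ncard = c j)
    (hb0 : b 1 + 1 < b 0) (hb2 : 1 ≤ b 2) (hb3 : 1 ≤ b 3) :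
    IsStable X := by
  classical
  -- degree of every vertex is b 0
  have hdeg : ∀ y : V, (X.neighborSet y).ncard = b 0 := by
    intro y
    have h0 := hb 0 (by omega) y y (X.dist_self)
    rw [← h0]
    congr 1
    ext z
    simp only [Set.mem_inter_iff, Set.mem_setOf_eq, SimpleGraph.mem_neighborSet]
    exact ⟨fun h => ⟨h, SimpleGraph.dist_eq_one_iff_adj.mpr h⟩, fun h => h.1⟩
  -- every vertex has a neighbour
  have hnbr : ∀ x : V, ∃ y, X.Adj x y := by
    intro x
    have h := hdeg x
    obtain ⟨y, hy⟩ := Set.nonempty_of_ncard_ne_zero (s := X.neighborSet x) (by omega)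
    exact ⟨y, hy⟩
  -- every edge lies in a triangle
  have hcommon : ∀ x y : V, X.Adj x y → ∃ z, X.Adj x z ∧ X.Adj y z := by
    intro x y hxy
    by_contra hno
    push_neg at hno
    have h1 := hb 1 (by omega) x y (SimpleGraph.dist_eq_one_iff_adj.mpr hxy)
    have hsub : X.neighborSet y ⊆
        insert x (X.neighborSet y ∩ {z | X.dist x z = 1 + 1}) := by
      intro z hz
      have hadjyz : X.Adj y z := hz
      have hd2 : X.dist x z ≤ 2 := by
        have ht := hconn.dist_triangle (u := x) (v := y) (w := z)
        have e1 : X.dist x y = 1 := SimpleGraph.dist_eq_one_iff_adj.mpr hxy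
        have e2 : X.dist y z = 1 := SimpleGraph.dist_eq_one_iff_adj.mpr hadjyz
        omega
      have h0 : X.dist x z = 0 ∨ X.dist x z = 1 ∨ X.dist x z = 2 := by omega
      rcases h0 with h0 | h0 | h0
      · left
        exact (hconn.dist_eq_zero_iff.mp h0).symm
      · exact absurd hadjyz (hno z (SimpleGraph.dist_eq_one_iff_adj.mp h0))
      · right
        exact ⟨hz, by simpa using h0⟩
    have hle := Set.ncard_le_ncard hsub (Set.toFinite _)
    have hins := Set.ncard_insert_le x (X.neighborSet y ∩ {z | X.dist x z = 1 + 1})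
    rw [hdeg y] at hle
    rw [h1] at hins
    omega
  -- main argument
  intro α
  obtain ⟨x₀⟩ := hconn.nonempty
  set bb : Bool := (α (x₀, false)).2 with hbb
  -- parity of the second coordinate under α is rigid
  have hpar : ∀ (p q : V × Bool) (w : (doubleCover X).Walk p q),
      xor (α p).2 p.2 = xor (α q).2 q.2 := by
    intro p q w
    induction w with
    | nil => rfl
    | @cons a e q h w ih =>
      have h2 : (doubleCover X).Adj (α a) (α e) := α.map_rel_iff.mpr h
      exact (bool_step _ _ _ _ h2.2 h.2).trans ih
  have hsnd : ∀ p : V × Bool, (α p).2 = xor p.2 bb := by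
    intro p
    obtain ⟨w⟩ := dc_reach X hconn hnbr hcommon p.1 x₀ p.2 false
    have h := hpar p (x₀, false) w
    simp only [Bool.xor_false] at h
    exact bool_solve _ _ _ h
  set σ : V → V := fun x => (α (x, false)).1 with hσ
  set τ : V → V := fun x => (α (x, true)).1 with hτ
  have hne2 : ∀ x y : V, (α (x, false)).2 ≠ (α (y, true)).2 := by
    intro x y
    rw [hsnd, hsnd]
    cases bb <;> simp
  have hrel : ∀ x y : V, X.Adj x y ↔ X.Adj (σ x) (τ y) := by
    intro x y
    constructor
    · intro h
      exact (α.map_rel_iff.mpr (⟨h, by simp⟩ :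
        (doubleCover X).Adj (x, false) (y, true))).1
    · intro h
      exact (α.map_rel_iff.mp ⟨h, hne2 x y⟩).1
  -- τ is surjective
  have hτsurj : ∀ w : V, ∃ y, τ y = w := by
    intro w
    set p := α.symm (w, !bb) with hp
    have h1 : (α p).2 = xor p.2 bb := hsnd p
    have h2 : α p = (w, !bb) := by rw [hp]; exact α.apply_symm_apply _
    rw [h2] at h1
    have hp2 : p.2 = true := bool_tt p.2 bb h1
    refine ⟨p.1, ?_⟩
    have hpe : ((p.1, true) : V × Bool) = p := Prod.ext rfl hp2.symm
    calc τ p.1 = (α (p.1, true)).1 := rfl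
      _ = (α p).1 := by rw [hpe]
      _ = w := by rw [h2]
  -- the heart: σ = τ
  have hστ : ∀ x : V, σ x = τ x := by
    intro x
    by_contra hne
    set u := σ x with hu
    set v := τ x with hv
    -- u and v are not adjacent
    have hnadj : ¬ X.Adj u v := fun h => X.irrefl ((hrel x x).mpr h)
    -- dist u v ≤ 3
    obtain ⟨y, hxy⟩ := hnbr x
    obtain ⟨z, hxz, hyz⟩ := hcommon x y hxy
    have e1 : X.Adj u (τ y) := (hrel x y).mp hxy
    have e2 : X.Adj (τ y) (σ z) := ((hrel z y).mp hyz.symm).symm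
    have e3 : X.Adj (σ z) v := (hrel z x).mp hxz.symm
    have hle3 : X.dist u v ≤ 3 := by
      have := SimpleGraph.dist_le
        (SimpleGraph.Walk.cons e1 (SimpleGraph.Walk.cons e2
          (SimpleGraph.Walk.cons e3 SimpleGraph.Walk.nil)))
      simpa using this
    -- every neighbour of u is within distance 2 of v
    have hC : ∀ w : V, X.Adj u w → X.dist v w ≤ 2 := by
      intro w hw
      obtain ⟨y', rfl⟩ := hτsurj w
      have hxy' : X.Adj x y' := (hrel x y').mpr hw
      obtain ⟨z', hxz', hy'z'⟩ := hcommon x y' hxy'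
      have f1 : X.Adj v (σ z') := ((hrel z' x).mp hxz'.symm).symm
      have f2 : X.Adj (σ z') (τ y') := (hrel z' y').mp hy'z'.symm
      have := SimpleGraph.dist_le
        (SimpleGraph.Walk.cons f1 (SimpleGraph.Walk.cons f2 SimpleGraph.Walk.nil))
      simpa using this
    -- dist u v ∈ {2,3}
    have hne0 : X.dist u v ≠ 0 := fun h => hne (hconn.dist_eq_zero_iff.mp h)
    have hne1 : X.dist u v ≠ 1 := fun h => hnadj (SimpleGraph.dist_eq_one_iff_adj.mp h)
    have hm : X.dist u v = 2 ∨ X.dist u v = 3 := by omega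
    rcases hm with hm | hm
    · have hkey := hb 2 (by omega) v u (by rw [SimpleGraph.dist_comm]; exact hm)
      obtain ⟨w, hw1, hw2⟩ := Set.nonempty_of_ncard_ne_zero
        (s := X.neighborSet u ∩ {z | X.dist v z = 2 + 1}) (by omega)
      have := hC w hw1
      have hw2' : X.dist v w = 3 := hw2
      omega
    · have hkey := hb 3 (by omega) v u (by rw [SimpleGraph.dist_comm]; exact hm)
      obtain ⟨w, hw1, hw2⟩ := Set.nonempty_of_ncard_ne_zero
        (s := X.neighborSet u ∩ {z | X.dist v z = 3 + 1}) (by omega)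
      have := hC w hw1
      have hw2' : X.dist v w = 4 := hw2
      omega
  -- assemble the expected automorphism
  have hαf : ∀ x : V, α (x, false) = (σ x, bb) := by
    intro x
    have := hsnd (x, false)
    exact Prod.ext rfl (by simpa using this)
  have hleft : ∀ x : V, (α.symm (σ x, bb)).1 = x := by
    intro x
    rw [← hαf x, α.symm_apply_apply]
  have hright : ∀ w : V, σ ((α.symm (w, bb)).1) = w := by
    intro w
    set p := α.symm (w, bb) with hp
    have h2 : α p = (w, bb) := by rw [hp]; exact α.apply_symm_apply _
    have h1 : (α p).2 = xor p.2 bb := hsnd p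
    rw [h2] at h1
    have hp2 : p.2 = false := bool_ff p.2 bb h1
    have hpe : ((p.1, false) : V × Bool) = p := Prod.ext rfl hp2.symm
    calc σ p.1 = (α (p.1, false)).1 := rfl
      _ = (α p).1 := by rw [hpe]
      _ = w := by rw [h2]
  refine ⟨⟨⟨σ, fun w => (α.symm (w, bb)).1, hleft, hright⟩, ?_⟩, bb, ?_⟩
  · intro a b'
    show X.Adj (σ a) (σ b') ↔ X.Adj a b'
    rw [hστ b']
    exact (hrel a b').symm
  · intro p
    have h1 : (α p).2 = xor p.2 bb := hsnd p
    cases hp2 : p.2 with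
    | false =>
      have hpe : ((p.1, false) : V × Bool) = p := Prod.ext rfl hp2.symm
      rw [← hpe]
      exact Prod.ext rfl (by simpa using hsnd (p.1, false))
    | true =>
      have hpe : ((p.1, true) : V × Bool) = p := Prod.ext rfl hp2.symm
      rw [← hpe]
      refine Prod.ext ?_ (by simpa using hsnd (p.1, true))
      show τ p.1 = σ p.1
      exact (hστ p.1).symm
end

section
/- Let X be a strongly regular graph with parameters (n,k,λ,μ) such that k > μ, μ ≠ λ, and λ ≥ 1. Then X is stable. -/
open SimpleGraph

theorem stable_srg_lambda_ne_mu {V : Type*} [Fintype V] (X : SimpleGraph V)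
    [DecidableRel X.Adj] (n k l m : ℕ)
    (hsrg : X.IsSRGWith n k l m) (hconn : X.Connected) (hdiam : X.diam = 2)
    (hk : m < k) (hne : m ≠ l) (hl : 1 ≤ l) :
    IsStable X := by
  classical
  intro α
  -- adjacent vertices have a common neighbour (λ ≥ 1)
  have hlam : ∀ u v : V, X.Adj u v → ∃ z, X.Adj u z ∧ X.Adj v z := by
    intro u v h
    have hc := hsrg.of_adj u v h
    have hpos : 0 < Fintype.card (X.commonNeighbors u v) := by omega
    obtain ⟨⟨z, hz⟩⟩ := Fintype.card_pos_iff.mp hpos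
    exact ⟨z, X.mem_commonNeighbors.mp hz⟩
  -- distinct non-adjacent vertices have a common neighbour (diameter 2)
  have hmu : ∀ u v : V, u ≠ v → ¬X.Adj u v → ∃ z, X.Adj u z ∧ X.Adj v z := by
    intro u v huv h
    have hnt : X.ediam ≠ ⊤ :=
      ediam_ne_top_of_diam_ne_zero (by rw [hdiam]; exact two_ne_zero)
    have hd2 : X.dist u v ≤ 2 := hdiam ▸ X.dist_le_diam hnt
    have hd0 : X.dist u v ≠ 0 := fun h0 => huv (hconn.dist_eq_zero_iff.mp h0)
    have hd1 : X.dist u v ≠ 1 := fun h1 => h (dist_eq_one_iff_adj.mp h1)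
    have hd : X.dist u v = 2 := by omega
    obtain ⟨p, hp⟩ := hconn.exists_walk_length_eq_dist u v
    rw [hd] at hp
    refine ⟨p.getVert 1, ?_, ?_⟩
    · have h01 := p.adj_getVert_succ (i := 0) (by omega)
      simpa using h01
    · have h12 := p.adj_getVert_succ (i := 1) (by omega)
      rw [show (1 + 1 : ℕ) = p.length by omega, Walk.getVert_length] at h12
      exact h12.symm
  -- X is twin-free since μ < k
  have htf : ∀ u v : V, X.neighborSet u = X.neighborSet v → u = v := by
    intro u v huv
    by_contra hne'
    have hnadj : ¬X.Adj u v := by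
      intro h
      have hv : v ∈ X.neighborSet v := huv ▸ h
      exact X.loopless.irrefl v hv
    have hm := hsrg.of_not_adj hne' hnadj
    have hcn : X.commonNeighbors u v = X.neighborSet u := by
      rw [commonNeighbors, huv, Set.inter_self]
    have hcard : Fintype.card (X.commonNeighbors u v)
        = Fintype.card (X.neighborSet u) :=
      Fintype.card_congr (Equiv.setCongr hcn)
    rw [hcard, X.card_neighborSet_eq_degree, hsrg.regular u] at hm
    omega
  -- characterization of "same side" in the double cover
  have hchar : ∀ p q : V × Bool, p.2 = q.2 ↔
      (p = q ∨ ∃ r, (doubleCover X).Adj r p ∧ (doubleCover X).Adj r q) := by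
    intro p q
    constructor
    · intro h
      by_cases hpq : p = q
      · exact Or.inl hpq
      · right
        have h1 : p.1 ≠ q.1 := fun h1 => hpq (Prod.ext h1 h)
        by_cases ha : X.Adj p.1 q.1
        · obtain ⟨z, hz1, hz2⟩ := hlam p.1 q.1 ha
          exact ⟨(z, !p.2), ⟨hz1.symm, by simp⟩, ⟨hz2.symm, by simp [← h]⟩⟩
        · obtain ⟨z, hz1, hz2⟩ := hmu p.1 q.1 h1 ha
          exact ⟨(z, !p.2), ⟨hz1.symm, by simp⟩, ⟨hz2.symm, by simp [← h]⟩⟩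
    · rintro (rfl | ⟨r, ⟨_, hr1⟩, ⟨_, hr2⟩⟩)
      · rfl
      · revert hr1 hr2
        cases hp2 : p.2 <;> cases hq2 : q.2 <;> cases hr2' : r.2 <;> simp
  -- α preserves the "same side" relation
  have hside : ∀ p q : V × Bool, (α p).2 = (α q).2 ↔ p.2 = q.2 := by
    intro p q
    rw [hchar (α p) (α q), hchar p q]
    constructor
    · rintro (h | ⟨r, h1, h2⟩)
      · exact Or.inl (α.injective h)
      · refine Or.inr ⟨α.symm r, ?_, ?_⟩
        · have h3 := α.map_adj_iff (v := α.symm r) (w := p)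
          rw [α.apply_symm_apply] at h3
          exact h3.mp h1
        · have h3 := α.map_adj_iff (v := α.symm r) (w := q)
          rw [α.apply_symm_apply] at h3
          exact h3.mp h2
    · rintro (rfl | ⟨r, h1, h2⟩)
      · exact Or.inl rfl
      · exact Or.inr ⟨α r, α.map_adj_iff.mpr h1, α.map_adj_iff.mpr h2⟩
  obtain ⟨x₀⟩ := hconn.nonempty
  -- the second coordinate transforms by xoring with a fixed bit
  have hb : ∀ p : V × Bool, (α p).2 = xor p.2 (α (x₀, false)).2 := by
    intro p
    cases hp : p.2 with
    | false =>
      simp only [Bool.false_xor]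
      exact (hside p (x₀, false)).mpr (by rw [hp])
    | true =>
      have h2 : (α p).2 ≠ (α (x₀, false)).2 := by
        intro hc
        have h3 := (hside p (x₀, false)).mp hc
        rw [hp] at h3
        simp at h3
      simp only [Bool.true_xor]
      cases h4 : (α p).2 <;> cases h5 : (α (x₀, false)).2 <;> simp_all
  -- the two induced maps on fibers
  have hfinj : Function.Injective (fun x : V => (α (x, false)).1) := by
    intro x y hxy
    have hxy' : α (x, false) = α (y, false) :=
      Prod.ext hxy (by rw [hb (x, false), hb (y, false)])
    have := α.injective hxy'
    exact congrArg Prod.fst this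
  have hginj : Function.Injective (fun x : V => (α (x, true)).1) := by
    intro x y hxy
    have hxy' : α (x, true) = α (y, true) :=
      Prod.ext hxy (by rw [hb (x, true), hb (y, true)])
    have := α.injective hxy'
    exact congrArg Prod.fst this
  let Fe : V ≃ V := Equiv.ofBijective _ (Finite.injective_iff_bijective.mp hfinj)
  let Ge : V ≃ V := Equiv.ofBijective _ (Finite.injective_iff_bijective.mp hginj)
  -- the fundamental adjacency relation
  have H : ∀ x y : V, X.Adj (Fe x) (Ge y) ↔ X.Adj x y := by
    intro x y
    have h := α.map_adj_iff (v := (x, false)) (w := (y, true))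
    have hne2 : (α (x, false)).2 ≠ (α (y, true)).2 := by
      rw [hb (x, false), hb (y, true)]
      simp
    constructor
    · intro ha
      exact (h.mp ⟨ha, hne2⟩).1
    · intro ha
      exact (h.mpr ⟨ha, by simp⟩).1
  -- counting common neighbours: Fe preserves their number
  have K : ∀ x y : V, Fintype.card (X.commonNeighbors (Fe x) (Fe y))
      = Fintype.card (X.commonNeighbors x y) := by
    intro x y
    apply Fintype.card_congr
    refine Equiv.subtypeEquiv Ge.symm fun z => ?_
    rw [mem_commonNeighbors, mem_commonNeighbors]
    have e1 := H x (Ge.symm z)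
    rw [Ge.apply_symm_apply] at e1
    have e2 := H y (Ge.symm z)
    rw [Ge.apply_symm_apply] at e2
    exact and_congr e1 e2
  -- Fe is an automorphism of X (uses λ ≠ μ)
  have hFadj : ∀ x y : V, X.Adj (Fe x) (Fe y) ↔ X.Adj x y := by
    intro x y
    by_cases hxy : X.Adj x y
    · simp only [hxy, iff_true]
      by_contra hc
      have hne3 : Fe x ≠ Fe y := fun h => X.ne_of_adj hxy (Fe.injective h)
      have hm2 := hsrg.of_not_adj hne3 hc
      rw [K, hsrg.of_adj x y hxy] at hm2
      exact hne hm2.symm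
    · simp only [hxy, iff_false]
      intro hc
      have hne3 : x ≠ y := by
        rintro rfl
        exact X.loopless.irrefl _ hc
      have h1 := hsrg.of_adj _ _ hc
      rw [K, hsrg.of_not_adj hne3 hxy] at h1
      exact hne h1
  -- the two maps coincide, by twin-freeness
  have hgf : ∀ y : V, Ge y = Fe y := by
    intro y
    apply htf
    ext u
    obtain ⟨x, rfl⟩ := Fe.surjective u
    simp only [mem_neighborSet]
    rw [X.adj_comm (Ge y), X.adj_comm (Fe y), H x y, hFadj x y]
  -- assemble the expected automorphism
  refine ⟨{ toEquiv := Fe, map_rel_iff' := fun {a b} => hFadj a b },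
    (α (x₀, false)).2, ?_⟩
  rintro ⟨x, i⟩
  cases i with
  | false => exact Prod.ext rfl (hb (x, false))
  | true => exact Prod.ext (hgf x) (hb (x, true))
end

section
/- Let X be a strongly regular graph with parameters (n,k,λ,μ) such that k > μ and λ = 0. Then X is stable. -/
open SimpleGraph

section Aux

open Finset

variable {V : Type*} [Fintype V]

private lemma key_sq {X : SimpleGraph V} [DecidableRel X.Adj] (φ ψ : Equiv.Perm V)
    (T1 : ∀ i j, X.adjMatrix ℚ (φ.symm i) j = X.adjMatrix ℚ i (ψ j))
    (T2 : ∀ i j, X.adjMatrix ℚ (ψ.symm i) j = X.adjMatrix ℚ i (φ j))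
    (i j : V) :
    (X.adjMatrix ℚ * X.adjMatrix ℚ) (φ.symm i) j
      = (X.adjMatrix ℚ * X.adjMatrix ℚ) i (φ j) := by
  rw [Matrix.mul_apply, Matrix.mul_apply]
  calc ∑ t, X.adjMatrix ℚ (φ.symm i) t * X.adjMatrix ℚ t j
      = ∑ t, X.adjMatrix ℚ i (ψ t) * X.adjMatrix ℚ t j := by
        simp_rw [T1]
    _ = ∑ s, X.adjMatrix ℚ i s * X.adjMatrix ℚ (ψ.symm s) j := by
        rw [← Equiv.sum_comp ψ (fun s => X.adjMatrix ℚ i s * X.adjMatrix ℚ (ψ.symm s) j)]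
        simp
    _ = ∑ s, X.adjMatrix ℚ i s * X.adjMatrix ℚ s (φ j) := by
        simp_rw [T2]

omit [Fintype V] in
private lemma adjM_iff_of_eq {G H : SimpleGraph V} [DecidableRel G.Adj] [DecidableRel H.Adj]
    {a b c d : V} (h : G.adjMatrix ℚ a b = H.adjMatrix ℚ c d) : G.Adj a b ↔ H.Adj c d := by
  by_cases h1 : G.Adj a b <;> by_cases h2 : H.Adj c d <;> simp_all [adjMatrix_apply]

/-- The core algebraic lemma: a two-fold automorphism `(φ, ψ)` of a triangle-free
strongly regular graph with `μ ≥ 1` which is twin-free must have `φ = ψ`. -/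
private lemma tf_pair_eq {X : SimpleGraph V} [DecidableRel X.Adj] {n k m : ℕ}
    (hsrg : X.IsSRGWith n k 0 m) (hm : 0 < m) (htf : TwinFree X)
    (φ ψ : Equiv.Perm V) (H : ∀ x y, X.Adj x y ↔ X.Adj (φ x) (ψ y)) :
    φ = ψ := by
  classical
  have P1 : ∀ i j, X.Adj (φ.symm i) j ↔ X.Adj i (ψ j) := by
    intro i j
    have := H (φ.symm i) j
    rwa [Equiv.apply_symm_apply] at this
  have P2 : ∀ i j, X.Adj (ψ.symm i) j ↔ X.Adj i (φ j) := by
    intro i j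
    have := H j (ψ.symm i)
    rw [Equiv.apply_symm_apply] at this
    rw [X.adj_comm j (ψ.symm i), X.adj_comm (φ j) i] at this
    exact this
  have T1 : ∀ i j, X.adjMatrix ℚ (φ.symm i) j = X.adjMatrix ℚ i (ψ j) := by
    intro i j; simp only [adjMatrix_apply]; rw [if_congr (P1 i j) rfl rfl]
  have T2 : ∀ i j, X.adjMatrix ℚ (ψ.symm i) j = X.adjMatrix ℚ i (φ j) := by
    intro i j; simp only [adjMatrix_apply]; rw [if_congr (P2 i j) rfl rfl]
  have key := key_sq φ ψ T1 T2
  have hsq := hsrg.matrix_eq (α := ℚ)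
  rw [pow_two] at hsq
  have hC : ∀ i j, Xᶜ.Adj (φ.symm i) j ↔ Xᶜ.Adj i (φ j) := by
    intro i j
    have h1 := key i j
    rw [hsq] at h1
    simp only [Matrix.add_apply, Matrix.smul_apply, zero_smul, Matrix.zero_apply, add_zero,
      smul_zero, zero_add, smul_eq_mul] at h1
    have hone : (1 : Matrix V V ℚ) (φ.symm i) j = (1 : Matrix V V ℚ) i (φ j) := by
      by_cases h : φ.symm i = j
      · have hi : i = φ j := by rw [← h, Equiv.apply_symm_apply]
        simp [Matrix.one_apply, h, hi]
      · have hi : i ≠ φ j := fun hc => h (by rw [hc, Equiv.symm_apply_apply])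
        simp [Matrix.one_apply, h, hi]
    rw [hone] at h1
    have h2 := add_left_cancel h1
    rw [nsmul_eq_mul, nsmul_eq_mul] at h2
    have hm' : (m : ℚ) ≠ 0 := by exact_mod_cast hm.ne'
    exact adjM_iff_of_eq (mul_left_cancel₀ hm' h2)
  have hAdjφ : ∀ i j, X.Adj (φ.symm i) j ↔ X.Adj i (φ j) := by
    intro i j
    by_cases h : φ.symm i = j
    · have hi : i = φ j := by rw [← h, Equiv.apply_symm_apply]
      rw [h, ← hi]
      simp
    · have hi : i ≠ φ j := fun hc => h (by rw [hc, Equiv.symm_apply_apply])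
      have := hC i j
      rw [compl_adj, compl_adj] at this
      simp only [h, hi, ne_eq, not_false_eq_true, true_and] at this
      exact not_iff_not.mp this
  have hNS : ∀ j, X.neighborSet (φ j) = X.neighborSet (ψ j) := by
    intro j
    ext i
    simp only [mem_neighborSet]
    rw [X.adj_comm, X.adj_comm (ψ j) i]
    exact ((hAdjφ i j).symm.trans (P1 i j))
  ext j
  exact htf _ _ (hNS j)

/-- Twin-freeness of a strongly regular graph with `μ < k`. -/
private lemma srg_twinFree {X : SimpleGraph V} [DecidableRel X.Adj] {n k m : ℕ}
    (hsrg : X.IsSRGWith n k 0 m) (hk : m < k) : TwinFree X := by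
  classical
  intro u v h
  by_contra hne
  by_cases hadj : X.Adj u v
  · have : v ∈ X.neighborSet u := hadj
    rw [h] at this
    exact X.irrefl this
  · have hμ := hsrg.of_not_adj hne hadj
    have hcn : X.commonNeighbors u v = X.neighborSet u := by
      rw [commonNeighbors, h, Set.inter_self]
    have hc2 : Fintype.card (X.commonNeighbors u v) = Fintype.card (X.neighborSet u) :=
      Fintype.card_congr (Equiv.setCongr hcn)
    rw [X.card_neighborSet_eq_degree, hsrg.regular u] at hc2
    omega

/-- Every walk in `X` lifts to the double cover, flipping the level by the parity
of its length. -/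
private lemma lift_walk {X : SimpleGraph V} {x y : V} (w : X.Walk x y) (i : Bool) :
    (doubleCover X).Reachable (x, i) (y, xor (decide (Odd w.length)) i) := by
  induction w generalizing i with
  | nil => simpa using Reachable.refl _
  | @cons a b c h p ih =>
    have step : (doubleCover X).Adj (a, i) (b, !i) := ⟨h, by simp⟩
    have := ih (!i)
    have hxor : xor (decide (Odd (p.length + 1))) i = xor (decide (Odd p.length)) (!i) := by
      rw [show decide (Odd (p.length + 1)) = !decide (Odd p.length) by
        simp only [Nat.odd_add_one, decide_not]]
      cases decide (Odd p.length) <;> cases i <;> rfl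
    rw [SimpleGraph.Walk.length_cons, hxor]
    exact step.reachable.trans this

end Aux

theorem stable_srg_lambda_zero {V : Type*} [Fintype V] (X : SimpleGraph V)
    [DecidableRel X.Adj] (n k m : ℕ)
    (hsrg : X.IsSRGWith n k 0 m) (hconn : X.Connected) (hdiam : X.diam = 2)
    (hk : m < k) :
    IsStable X := by
  classical
  have hnV : Nonempty V := hconn.nonempty
  -- a pair at distance 2
  obtain ⟨u₀, v₀, hd2⟩ : ∃ u v, X.dist u v = 2 := by
    obtain ⟨u, v, h⟩ := X.exists_dist_eq_diam
    exact ⟨u, v, by rw [h, hdiam]⟩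
  -- μ ≥ 1
  have hm : 0 < m := by
    obtain ⟨w, hw⟩ := (hconn u₀ v₀).exists_walk_length_eq_dist
    rw [hd2] at hw
    have hadj1 : X.Adj u₀ (w.getVert 1) := by
      have := w.adj_getVert_succ (i := 0) (by omega)
      rwa [SimpleGraph.Walk.getVert_zero] at this
    have hadj2 : X.Adj (w.getVert 1) v₀ := by
      have := w.adj_getVert_succ (i := 1) (by omega)
      rwa [show (1 : ℕ) + 1 = w.length from by omega, SimpleGraph.Walk.getVert_length] at this
    have hne : u₀ ≠ v₀ := by
      intro h; rw [h, SimpleGraph.dist_self] at hd2; omega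
    have hnadj : ¬X.Adj u₀ v₀ := by
      intro h; rw [(SimpleGraph.dist_eq_one_iff_adj).mpr h] at hd2; omega
    have hmem : w.getVert 1 ∈ X.commonNeighbors u₀ v₀ := ⟨hadj1, hadj2.symm⟩
    have := hsrg.of_not_adj hne hnadj
    rw [← this]
    exact Fintype.card_pos_iff.mpr ⟨⟨_, hmem⟩⟩
  -- common neighbours of nonadjacent distinct vertices
  have hcomm : ∀ u v : V, u ≠ v → ¬X.Adj u v → ∃ c, X.Adj u c ∧ X.Adj v c := by
    intro u v hne hnadj
    have := hsrg.of_not_adj hne hnadj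
    have : 0 < Fintype.card (X.commonNeighbors u v) := by omega
    obtain ⟨⟨c, hc⟩⟩ := Fintype.card_pos_iff.mp this
    exact ⟨c, hc.1, hc.2⟩
  have htf : TwinFree X := srg_twinFree hsrg hk
  -- facts about u₀ v₀
  have hne0 : u₀ ≠ v₀ := by intro h; rw [h, SimpleGraph.dist_self] at hd2; omega
  have hnadj0 : ¬X.Adj u₀ v₀ := by
    intro h; rw [(SimpleGraph.dist_eq_one_iff_adj).mpr h] at hd2; omega
  -- a neighbour of u₀ not adjacent to v₀
  obtain ⟨w₀, hw₀u, hw₀v⟩ : ∃ w, X.Adj u₀ w ∧ ¬X.Adj v₀ w := by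
    by_contra hcon
    push_neg at hcon
    have hsub : X.neighborSet u₀ ⊆ X.neighborSet v₀ := fun z hz => hcon z hz
    have hcn : X.commonNeighbors u₀ v₀ = X.neighborSet u₀ :=
      Set.inter_eq_self_of_subset_left hsub
    have hμ := hsrg.of_not_adj hne0 hnadj0
    have hc2 : Fintype.card (X.commonNeighbors u₀ v₀) = Fintype.card (X.neighborSet u₀) :=
      Fintype.card_congr (Equiv.setCongr hcn)
    rw [X.card_neighborSet_eq_degree, hsrg.regular u₀] at hc2
    omega
  have hw₀v' : w₀ ≠ v₀ := by rintro rfl; exact hnadj0 hw₀u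
  obtain ⟨c₀, hc₀u, hc₀v⟩ := hcomm u₀ v₀ hne0 hnadj0
  obtain ⟨t₀, ht₀w, ht₀v⟩ := hcomm w₀ v₀ hw₀v' (fun h => hw₀v h.symm)
  -- flipping the level at u₀ : the pentagon u₀ c₀ v₀ t₀ w₀ u₀
  have hflip0 : ∀ i : Bool, (doubleCover X).Reachable (u₀, i) (u₀, !i) := by
    intro i
    have e1 : (doubleCover X).Adj (u₀, i) (c₀, !i) := ⟨hc₀u, by simp⟩
    have e2 : (doubleCover X).Adj (c₀, !i) (v₀, i) := ⟨hc₀v.symm, by simp⟩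
    have e3 : (doubleCover X).Adj (v₀, i) (t₀, !i) := ⟨ht₀v, by simp⟩
    have e4 : (doubleCover X).Adj (t₀, !i) (w₀, i) := ⟨ht₀w.symm, by simp⟩
    have e5 : (doubleCover X).Adj (w₀, i) (u₀, !i) := ⟨hw₀u.symm, by simp⟩
    exact e1.reachable.trans (e2.reachable.trans (e3.reachable.trans
      (e4.reachable.trans e5.reachable)))
  -- flipping the level anywhere
  have hflip : ∀ (x : V) (i : Bool), (doubleCover X).Reachable (x, i) (x, !i) := by
    intro x i
    obtain ⟨w⟩ := hconn x u₀
    have h1 := lift_walk w i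
    have h2 := hflip0 (xor (decide (Odd w.length)) i)
    have h3 := lift_walk w.reverse (!(xor (decide (Odd w.length)) i))
    rw [SimpleGraph.Walk.length_reverse] at h3
    have : xor (decide (Odd w.length)) (!(xor (decide (Odd w.length)) i)) = !i := by
      cases decide (Odd w.length) <;> cases i <;> rfl
    rw [this] at h3
    exact (h1.trans h2).trans h3
  -- the double cover is preconnected
  have hpre : (doubleCover X).Preconnected := by
    rintro ⟨x, i⟩ ⟨y, j⟩
    obtain ⟨w⟩ := hconn x y
    have h1 := lift_walk w i
    set j' := xor (decide (Odd w.length)) i with hj'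
    by_cases h : j' = j
    · rw [h] at h1; exact h1
    · have : j = !j' := Bool.eq_not_iff.mpr (Ne.symm h)
      rw [this]
      exact h1.trans (hflip y j')
  -- now take an automorphism α
  intro α
  -- the level shift of α is constant
  have hshift : ∀ p q : V × Bool, xor p.2 (α p).2 = xor q.2 (α q).2 := by
    have hadj : ∀ p q : V × Bool, (doubleCover X).Adj p q →
        xor p.2 (α p).2 = xor q.2 (α q).2 := by
      intro p q h
      have h' : (doubleCover X).Adj (α p) (α q) := α.map_adj_iff.mpr h
      have h2 : q.2 = !p.2 := Bool.eq_not_iff.mpr (Ne.symm h.2)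
      have h2' : (α q).2 = !(α p).2 := Bool.eq_not_iff.mpr (Ne.symm h'.2)
      rw [h2, h2']
      cases hp : p.2 <;> cases hq : (α p).2 <;> rfl
    intro p q
    obtain ⟨w⟩ := hpre p q
    induction w with
    | nil => rfl
    | cons h w ih => exact (hadj _ _ h).trans ih
  obtain ⟨x₀⟩ := hnV
  set b : Bool := xor false (α (x₀, false)).2 with hbdef
  have hb : ∀ p : V × Bool, (α p).2 = xor p.2 b := by
    intro p
    have := hshift p (x₀, false)
    rw [← hbdef] at this
    rw [← this]
    cases p.2 <;> cases (α p).2 <;> rfl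
  -- the two vertex maps
  set f : V → V := fun x => (α (x, false)).1 with hfdef
  set g : V → V := fun x => (α (x, true)).1 with hgdef
  have hαf : ∀ x : V, α (x, false) = (f x, xor false b) := by
    intro x
    exact Prod.ext rfl (hb (x, false))
  have hαg : ∀ x : V, α (x, true) = (g x, xor true b) := by
    intro x
    exact Prod.ext rfl (hb (x, true))
  -- f and g are bijective
  have hfbij : Function.Bijective f := by
    constructor
    · intro x x' h
      have : α (x, false) = α (x', false) := by rw [hαf, hαf, h]
      have := α.injective this
      exact congrArg Prod.fst this
    · intro y
      obtain ⟨⟨p1, p2⟩, hαp⟩ : ∃ p, α p = (y, xor false b) :=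
        ⟨α.symm _, α.apply_symm_apply _⟩
      have h3 := hb (p1, p2)
      rw [hαp] at h3
      have hp2 : p2 = false := by
        have h4 := congrArg (fun t => xor t b) h3
        simpa [Bool.xor_assoc] using h4.symm
      rw [hp2] at hαp
      exact ⟨p1, congrArg Prod.fst hαp⟩
  have hgbij : Function.Bijective g := by
    constructor
    · intro x x' h
      have : α (x, true) = α (x', true) := by rw [hαg, hαg, h]
      have := α.injective this
      exact congrArg Prod.fst this
    · intro y
      obtain ⟨⟨p1, p2⟩, hαp⟩ : ∃ p, α p = (y, xor true b) :=
        ⟨α.symm _, α.apply_symm_apply _⟩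
      have h3 := hb (p1, p2)
      rw [hαp] at h3
      have hp2 : p2 = true := by
        have h4 := congrArg (fun t => xor t b) h3
        simpa [Bool.xor_assoc] using h4.symm
      rw [hp2] at hαp
      exact ⟨p1, congrArg Prod.fst hαp⟩
  -- the two-fold automorphism condition
  have H : ∀ x y : V, X.Adj x y ↔ X.Adj (f x) (g y) := by
    intro x y
    have h1 : (doubleCover X).Adj (x, false) (y, true) ↔
        (doubleCover X).Adj (α (x, false)) (α (y, true)) := (α.map_adj_iff).symm
    rw [hαf, hαg] at h1
    constructor
    · intro h
      exact (h1.mp ⟨h, by simp⟩).1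
    · intro h
      have h2 : (doubleCover X).Adj (f x, xor false b) (g y, xor true b) :=
        ⟨h, by cases b <;> simp⟩
      exact (h1.mpr h2).1
  -- conclude f = g via the core lemma
  set φ : Equiv.Perm V := Equiv.ofBijective f hfbij with hφ
  set ψ : Equiv.Perm V := Equiv.ofBijective g hgbij with hψ
  have hfg : φ = ψ := tf_pair_eq hsrg hm htf φ ψ (by
    intro x y
    simpa [hφ, hψ, Equiv.ofBijective_apply] using H x y)
  have hfg' : ∀ x, f x = g x := by
    intro x
    have := congrFun (congrArg (fun (e : Equiv.Perm V) => (e : V → V)) hfg) x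
    simpa [hφ, hψ] using this
  -- f is an automorphism of X
  have Hf : ∀ x y : V, X.Adj (φ x) (φ y) ↔ X.Adj x y := by
    intro x y
    have := H x y
    rw [← hfg' y] at this
    constructor
    · intro h; exact this.mpr (by simpa [hφ] using h)
    · intro h; simpa [hφ] using this.mp h
  refine ⟨⟨φ, fun {x y} => Hf x y⟩, b, ?_⟩
  rintro ⟨x, i⟩
  cases i
  · rw [hαf]
    rfl
  · rw [hαg]
    exact Prod.ext (by simp [hφ, (hfg' x).symm]) rfl
end
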